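/- (Proposition, part (ii).) Let (ψ_c)_{c≥1} be a sequence of nonnegative reals with ∑_{c=1}^{∞} ψ_c = 1, let n ≥ 1, let Z_1, …, Z_n be positive integers with Z* = max_{1≤i≤n} Z_i, and let U_1, …, U_n be reals satisfying 0 < U_i < ψ_{Z_i} for each i. Set U* = min_{1≤i≤n} U_i and define C* = min{ c ∈ ℤ⁺ : ∑_{l=1}^{c} ψ_l > 1 − U* }. Then C* ≥ Z*. -/

import Mathlib

/-- Proposition, part (ii): if the nonnegative weights `ψ 1, ψ 2, …` sum to `1`,
`Z 1, …, Z n` are positive integer allocations with maximum `Zstar`, the slice variables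
satisfy `0 < U i < ψ (Z i)`, `Ustar` is the minimum of the `U i`, and `Cstar` is the least
positive integer `c` with `∑_{l=1}^{c} ψ_l > 1 - Ustar`, then `Cstar ≥ Zstar`. -/
theorem truncation_at_least_max_allocation (ψ : ℕ → ℝ) (hψ : ∀ c, 1 ≤ c → 0 ≤ ψ c)
    (hsum : HasSum (fun c : ℕ => ψ (c + 1)) 1)
    (n : ℕ) (hn : 1 ≤ n) (Z : Fin n → ℕ) (hZ : ∀ i, 1 ≤ Z i)
    (Zstar : ℕ) (hZstar : IsGreatest (Set.range Z) Zstar)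
    (U : Fin n → ℝ) (hU : ∀ i, 0 < U i ∧ U i < ψ (Z i))
    (Ustar : ℝ) (hUstar : IsLeast (Set.range U) Ustar)
    (Cstar : ℕ)
    (hCstar : IsLeast {c : ℕ | 1 ≤ c ∧ 1 - Ustar < ∑ l ∈ Finset.Icc 1 c, ψ l} Cstar) :
    Zstar ≤ Cstar := by
  by_contra h
  push_neg at h
  obtain ⟨⟨i0, hi0⟩, -⟩ := hZstar
  have hUle : Ustar ≤ U i0 := hUstar.2 ⟨i0, rfl⟩
  have hUi := hU i0
  have hZi : 1 ≤ Z i0 := hZ i0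
  have hnot : Z i0 - 1 ∉ Finset.range Cstar := by
    simp only [Finset.mem_range]
    omega
  have hle := sum_le_hasSum (insert (Z i0 - 1) (Finset.range Cstar))
    (fun c _ => hψ (c + 1) (by omega)) hsum
  rw [Finset.sum_insert hnot] at hle
  have hZe : Z i0 - 1 + 1 = Z i0 := by omega
  rw [hZe] at hle
  have hsum_eq : ∑ c ∈ Finset.range Cstar, ψ (c + 1) = ∑ l ∈ Finset.Icc 1 Cstar, ψ l := by
    rw [show Finset.Icc 1 Cstar = Finset.Ico 1 (Cstar + 1) by rfl,
      Finset.sum_Ico_eq_sum_range]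
    simp [add_comm]
  rw [hsum_eq] at hle
  have hC := hCstar.1.2
  linarith [hUi.1, hUi.2]
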